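/- (Hierarchical-voting lower bound) Fix integers m, M, p, N with m, M, p ≥ 1 and N ≥ 2^m, and set q := (M + 2)m. For each i ∈ {1,…,m} and prefix w ∈ {0,1}^{i−1}, let r(i, w) ∈ [0,1] and let v(i, w) ∈ {YES, NO, INV} be a labeling such that v(i, w) = YES implies r(i, w) ≥ (1 − 2^{−p})/2^M and v(i, w) = NO implies r(i, w) ≤ 2^{−p}. For y ∈ {0,1}^m define P(y) := Π_{i=1}^m (r(i, y₁⋯y_{i−1}) if y_i = 1 else 1 − r(i, y₁⋯y_{i−1})), let val(y) := Σ_{i=1}^m y_i 2^{m−i}, and define Q(y) := P(y) · (2^{−q})^{(N−1) − val(y)}. Let A := {y : for all i, v(i, y₁⋯y_{i−1}) = YES ⟹ y_i = 1 and v(i, y₁⋯y_{i−1}) = NO ⟹ y_i = 0} (correct query strings) and B := {y ∉ A : for all i, not (v(i, y₁⋯y_{i−1}) = NO and y_i = 1)} (incorrect query strings whose every mistake answers 0 where the correct answer is 1). Then Σ_{y ∈ A} Q(y) − Σ_{y ∈ B} Q(y) ≥ (2^{−q})^{N−1} · (1/2^{Mm}) · (1 − 1/2^m − m/(2^p − 1)).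 -/

import Mathlib

/-- Labels of queries: a valid YES instance, a valid NO instance, or an invalid
(promise-violating) instance. -/
inductive QLabel where
  | yes : QLabel
  | no : QLabel
  | inv : QLabel
deriving DecidableEq

/-- The prefix `y₁⋯y_{i−1}` of a query string `y` (here zero-indexed). -/
def prefixOf {m : ℕ} (y : Fin m → Bool) (i : Fin m) : Fin i → Bool :=
  fun j => y ⟨j, j.isLt.trans i.isLt⟩

/-- `P(y) = Π_i (r(i, y₁⋯y_{i−1})` if `y_i = 1` else `1 − r(i, y₁⋯y_{i−1}))`: the
probability that the guessing phase produces query string `y`. -/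
noncomputable def guessProb (m : ℕ) (r : (i : Fin m) → (Fin i → Bool) → ℝ)
    (y : Fin m → Bool) : ℝ :=
  ∏ i : Fin m, if y i then r i (prefixOf y i) else 1 - r i (prefixOf y i)

/-- `val(y) = Σ_i y_i 2^{m−i}`: the integer value of the query string `y`. -/
def strVal (m : ℕ) (y : Fin m → Bool) : ℕ :=
  ∑ i : Fin m, if y i then 2 ^ (m - 1 - (i : ℕ)) else 0

/-- `Q(y) = P(y) · (2^{−q})^{(N−1) − val(y)}` with `q = (M+2)m`: the probability that `y`
survives the hierarchical voting phase. -/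
noncomputable def voteProb (m M N : ℕ) (r : (i : Fin m) → (Fin i → Bool) → ℝ)
    (y : Fin m → Bool) : ℝ :=
  guessProb m r y * ((1 : ℝ) / 2 ^ ((M + 2) * m)) ^ (N - 1 - strVal m y)

/-- `y` is a correct query string: it answers `1` on every YES query and `0` on every
NO query. -/
def IsCorrect (m : ℕ) (v : (i : Fin m) → (Fin i → Bool) → QLabel)
    (y : Fin m → Bool) : Prop :=
  ∀ i : Fin m, (v i (prefixOf y i) = QLabel.yes → y i = true) ∧
    (v i (prefixOf y i) = QLabel.no → y i = false)

/-- `y` is an incorrect query string all of whose mistakes answer `0` where the correct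
answer is `1`. -/
def IsIncorrect (m : ℕ) (v : (i : Fin m) → (Fin i → Bool) → QLabel)
    (y : Fin m → Bool) : Prop :=
  ¬ IsCorrect m v y ∧ ∀ i : Fin m, ¬ (v i (prefixOf y i) = QLabel.no ∧ y i = true)

instance (m : ℕ) (v : (i : Fin m) → (Fin i → Bool) → QLabel) :
    DecidablePred (IsCorrect m v) := fun y => by
  unfold IsCorrect; infer_instance

instance (m : ℕ) (v : (i : Fin m) → (Fin i → Bool) → QLabel) :
    DecidablePred (IsIncorrect m v) := fun y => by
  unfold IsIncorrect; infer_instance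

def Clean (m : ℕ) (v : (i : Fin m) → (Fin i → Bool) → QLabel)
    (y : Fin m → Bool) : Prop :=
  ∀ i : Fin m, ¬ (v i (prefixOf y i) = QLabel.no ∧ y i = true)

def tailR {m : ℕ} (r : (i : Fin (m+1)) → (Fin i → Bool) → ℝ) (b : Bool) :
    (i : Fin m) → (Fin i → Bool) → ℝ :=
  fun i w => r i.succ (Fin.cons b w)

def tailV {m : ℕ} (v : (i : Fin (m+1)) → (Fin i → Bool) → QLabel) (b : Bool) :
    (i : Fin m) → (Fin i → Bool) → QLabel :=
  fun i w => v i.succ (Fin.cons b w)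

lemma prefixOf_cons_succ {m : ℕ} (b : Bool) (z : Fin m → Bool) (i : Fin m) :
    prefixOf (Fin.cons b z) i.succ = Fin.cons b (prefixOf z i) := by
  funext j; refine Fin.cases ?_ ?_ j
  · rfl
  · intro j'; rfl

lemma prefixOf_cons_zero {m : ℕ} (b : Bool) (z : Fin m → Bool) :
    prefixOf (Fin.cons b z) 0 = Fin.elim0 := by
  funext j; exact j.elim0

lemma guessProb_cons {m : ℕ} (r : (i : Fin (m+1)) → (Fin i → Bool) → ℝ)
    (b : Bool) (z : Fin m → Bool) :
    guessProb (m+1) r (Fin.cons b z) =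
      (if b then r 0 Fin.elim0 else 1 - r 0 Fin.elim0) * guessProb m (tailR r b) z := by
  unfold guessProb
  rw [Fin.prod_univ_succ]
  congr 1
  · rw [Fin.cons_zero, prefixOf_cons_zero]
  · exact Finset.prod_congr rfl fun i _ => by
      rw [Fin.cons_succ, prefixOf_cons_succ]; rfl

lemma strVal_cons {m : ℕ} (b : Bool) (z : Fin m → Bool) :
    strVal (m+1) (Fin.cons b z) = (if b then 2 ^ m else 0) + strVal m z := by
  unfold strVal
  rw [Fin.sum_univ_succ]
  simp only [Fin.cons_zero, Fin.cons_succ]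
  congr 1
  refine Finset.sum_congr rfl fun i _ => ?_
  have h : m + 1 - 1 - ((i : ℕ) + 1) = m - 1 - (i : ℕ) := by omega
  rw [show ((i.succ : Fin (m+1)) : ℕ) = (i : ℕ) + 1 from rfl, h]

lemma isCorrect_cons {m : ℕ} (v : (i : Fin (m+1)) → (Fin i → Bool) → QLabel)
    (b : Bool) (z : Fin m → Bool) :
    IsCorrect (m+1) v (Fin.cons b z) ↔
      ((v 0 Fin.elim0 = QLabel.yes → b = true) ∧ (v 0 Fin.elim0 = QLabel.no → b = false)) ∧
        IsCorrect m (tailV v b) z := by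
  unfold IsCorrect
  rw [Fin.forall_fin_succ]
  constructor
  · rintro ⟨h0, hs⟩
    refine ⟨?_, fun i => ?_⟩
    · rw [prefixOf_cons_zero, Fin.cons_zero] at h0; exact h0
    · have := hs i; rw [prefixOf_cons_succ, Fin.cons_succ] at this; exact this
  · rintro ⟨h0, hs⟩
    refine ⟨?_, fun i => ?_⟩
    · rw [prefixOf_cons_zero, Fin.cons_zero]; exact h0
    · rw [prefixOf_cons_succ, Fin.cons_succ]; exact hs i

lemma clean_cons {m : ℕ} (v : (i : Fin (m+1)) → (Fin i → Bool) → QLabel)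
    (b : Bool) (z : Fin m → Bool) :
    Clean (m+1) v (Fin.cons b z) ↔
      (¬ (v 0 Fin.elim0 = QLabel.no ∧ b = true)) ∧ Clean m (tailV v b) z := by
  unfold Clean
  rw [Fin.forall_fin_succ]
  constructor
  · rintro ⟨h0, hs⟩
    refine ⟨?_, fun i => ?_⟩
    · rw [prefixOf_cons_zero, Fin.cons_zero] at h0; exact h0
    · have := hs i; rw [prefixOf_cons_succ, Fin.cons_succ] at this; exact this
  · rintro ⟨h0, hs⟩
    refine ⟨?_, fun i => ?_⟩
    · rw [prefixOf_cons_zero, Fin.cons_zero]; exact h0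
    · rw [prefixOf_cons_succ, Fin.cons_succ]; exact hs i

-- sum decomposition
lemma sum_cons {m : ℕ} (f : (Fin (m+1) → Bool) → ℝ) :
    ∑ y : Fin (m+1) → Bool, f y =
      (∑ z : Fin m → Bool, f (Fin.cons true z)) + ∑ z : Fin m → Bool, f (Fin.cons false z) := by
  rw [← Equiv.sum_comp (Fin.consEquiv (fun _ => Bool)) f, Fintype.sum_prod_type, Fintype.sum_bool]
  rfl

lemma guessProb_nonneg {m : ℕ} (r : (i : Fin m) → (Fin i → Bool) → ℝ)
    (hr0 : ∀ i w, 0 ≤ r i w) (hr1 : ∀ i w, r i w ≤ 1) (y : Fin m → Bool) :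
    0 ≤ guessProb m r y := by
  refine Finset.prod_nonneg fun i _ => ?_
  split
  · exact hr0 _ _
  · linarith [hr1 i (prefixOf y i)]

lemma sum_guessProb {m : ℕ} (r : (i : Fin m) → (Fin i → Bool) → ℝ) :
    ∑ y : Fin m → Bool, guessProb m r y = 1 := by
  induction m with
  | zero =>
      rw [Fintype.sum_unique]
      unfold guessProb
      simp
  | succ m ih =>
      rw [sum_cons]
      simp only [guessProb_cons]
      rw [← Finset.mul_sum, ← Finset.mul_sum, ih, ih]
      simp

lemma strVal_lt {m : ℕ} (y : Fin m → Bool) : strVal m y < 2 ^ m := by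
  induction m with
  | zero =>
      unfold strVal; simp
  | succ m ih =>
      rw [← Fin.cons_self_tail y, strVal_cons]
      have := ih (Fin.tail y)
      split <;> simp [pow_succ] <;> omega

lemma sum_weight_le {m : ℕ} (r : (i : Fin m) → (Fin i → Bool) → ℝ) (C : ℝ)
    (hC : 1 ≤ C) (hr0 : ∀ i w, 0 ≤ r i w) (hr1 : ∀ i w, r i w ≤ 1) :
    ∑ y : Fin m → Bool, guessProb m r y * C ^ strVal m y ≤ C ^ (2 ^ m - 1) := by
  calc ∑ y : Fin m → Bool, guessProb m r y * C ^ strVal m y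
      ≤ ∑ y : Fin m → Bool, guessProb m r y * C ^ (2 ^ m - 1) := by
        refine Finset.sum_le_sum fun y _ => ?_
        refine mul_le_mul_of_nonneg_left ?_ (guessProb_nonneg r hr0 hr1 y)
        exact pow_le_pow_right₀ hC (by have := strVal_lt y; omega)
    _ = C ^ (2 ^ m - 1) := by rw [← Finset.sum_mul, sum_guessProb, one_mul]

open Classical in
noncomputable def sgn (m : ℕ) (v : (i : Fin m) → (Fin i → Bool) → QLabel)
    (y : Fin m → Bool) : ℝ :=
  if IsCorrect m v y then 1 else if Clean m v y then -1 else 0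

lemma neg_one_le_sgn {m : ℕ} (v : (i : Fin m) → (Fin i → Bool) → QLabel)
    (y : Fin m → Bool) : -1 ≤ sgn m v y := by
  unfold sgn; split
  · norm_num
  · split <;> norm_num

lemma sgn_congr {m m' : ℕ} (v : (i : Fin m) → (Fin i → Bool) → QLabel)
    (y : Fin m → Bool) (v' : (i : Fin m') → (Fin i → Bool) → QLabel) (y' : Fin m' → Bool)
    (h1 : IsCorrect m v y ↔ IsCorrect m' v' y')
    (h2 : Clean m v y ↔ Clean m' v' y') : sgn m v y = sgn m' v' y' := by
  unfold sgn
  by_cases hc : IsCorrect m' v' y'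
  · rw [if_pos (h1.mpr hc), if_pos hc]
  · rw [if_neg (fun h => hc (h1.mp h)), if_neg hc]
    by_cases hk : Clean m' v' y'
    · rw [if_pos (h2.mpr hk), if_pos hk]
    · rw [if_neg (fun h => hk (h2.mp h)), if_neg hk]

lemma sgn_eq_zero {m : ℕ} (v : (i : Fin m) → (Fin i → Bool) → QLabel)
    (y : Fin m → Bool) (h1 : ¬ IsCorrect m v y) (h2 : ¬ Clean m v y) : sgn m v y = 0 := by
  unfold sgn; rw [if_neg h1, if_neg h2]

-- arithmetic helper lemmas
lemma arith_yes (C ρ n K D S P r0 : ℝ)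
    (hC0 : 0 < C) (hρ0 : 0 ≤ ρ) (hρ1 : ρ ≤ 1) (hn : 0 ≤ n)
    (hKD : K = D * C) (hK1 : 1 ≤ K) (hD0 : 0 ≤ D)
    (hbase : 0 ≤ ρ * P - (n + 1) / C)
    (hS1 : P - n / C ≤ S) (hS0 : 0 ≤ S) (hr : ρ ≤ r0) :
    ρ * P - (n + 1) / C ≤ r0 * K * S - D := by
  have hnC : 0 ≤ n / C := by positivity
  have huC : 0 ≤ 1 / C := by positivity
  have hK0 : (0:ℝ) < K := lt_of_lt_of_le one_pos hK1
  have hD : D = K * (1 / C) := by rw [hKD]; field_simp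
  have t1 : ρ * S ≤ r0 * S := mul_le_mul_of_nonneg_right hr hS0
  have t2 : ρ * (P - n / C) ≤ ρ * S := mul_le_mul_of_nonneg_left hS1 hρ0
  have t3 : K * (ρ * (P - n / C)) ≤ K * (r0 * S) :=
    mul_le_mul_of_nonneg_left (t2.trans t1) hK0.le
  have p1 : 0 ≤ (K - 1) * (ρ * P - (n + 1) / C) := mul_nonneg (by linarith) hbase
  have p2 : 0 ≤ K * ((1 - ρ) * (n / C)) :=
    mul_nonneg hK0.le (mul_nonneg (by linarith) hnC)
  have e : (n + 1) / C = n / C + 1 / C := by ring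
  nlinarith [t3, p1, p2]

lemma arith_no (C ρ ε n S P r0 : ℝ)
    (hC0 : 0 < C) (hρ0 : 0 ≤ ρ) (hρ1 : ρ ≤ 1) (hρε : ρ ≤ 1 - ε)
    (hn : 0 ≤ n)
    (hS1 : P - n / C ≤ S) (hbase0 : 0 ≤ P - n / C) (hr : r0 ≤ ε) :
    ρ * P - (n + 1) / C ≤ (1 - r0) * S := by
  have hnC : 0 ≤ n / C := by positivity
  have huC : 0 ≤ 1 / C := by positivity
  have hS0 : 0 ≤ S := le_trans hbase0 hS1
  have t1 : ρ * S ≤ (1 - r0) * S := mul_le_mul_of_nonneg_right (by linarith) hS0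
  have t2 : ρ * (P - n / C) ≤ ρ * S := mul_le_mul_of_nonneg_left hS1 hρ0
  have p2 : ρ * (n / C) ≤ n / C := mul_le_of_le_one_left hnC hρ1
  have e : (n + 1) / C = n / C + 1 / C := by ring
  nlinarith [t1, t2, p2]

lemma arith_inv (C ρ n K St Sf P r0 : ℝ)
    (hC0 : 0 < C) (hρ0 : 0 ≤ ρ) (hρ1 : ρ ≤ 1) (hK1 : 1 ≤ K)
    (hr00 : 0 ≤ r0) (hr01 : r0 ≤ 1)
    (hSt1 : P - n / C ≤ St) (hSf1 : P - n / C ≤ Sf)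
    (hbase0 : 0 ≤ P - n / C) (hP0 : 0 ≤ P) :
    ρ * P - (n + 1) / C ≤ r0 * K * St + (1 - r0) * Sf := by
  have huC : 0 ≤ 1 / C := by positivity
  have hSt0 : 0 ≤ St := le_trans hbase0 hSt1
  have hSf0 : 0 ≤ Sf := le_trans hbase0 hSf1
  have t1 : r0 * St ≤ r0 * K * St := by
    nlinarith [mul_nonneg (mul_nonneg hr00 (sub_nonneg.mpr hK1)) hSt0]
  have t2 : r0 * (P - n / C) ≤ r0 * St := mul_le_mul_of_nonneg_left hSt1 hr00
  have t3 : (1 - r0) * (P - n / C) ≤ (1 - r0) * Sf :=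
    mul_le_mul_of_nonneg_left hSf1 (by linarith)
  have t4 : ρ * P ≤ P := mul_le_of_le_one_left hP0 hρ1
  have e : (n + 1) / C = n / C + 1 / C := by ring
  nlinarith [t1, t2, t3, t4]

lemma aux_lower (C ρ ε : ℝ) (hC : 1 ≤ C) (hρ0 : 0 ≤ ρ) (hε0 : 0 ≤ ε) (hρε : ρ ≤ 1 - ε) :
    ∀ (m : ℕ) (r : (i : Fin m) → (Fin i → Bool) → ℝ)
      (v : (i : Fin m) → (Fin i → Bool) → QLabel),
      (∀ t : ℕ, t ≤ m → (t : ℝ) / C ≤ ρ ^ t) →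
      (∀ i w, 0 ≤ r i w) → (∀ i w, r i w ≤ 1) →
      (∀ i w, v i w = QLabel.yes → ρ ≤ r i w) →
      (∀ i w, v i w = QLabel.no → r i w ≤ ε) →
      ρ ^ m - m / C ≤
        ∑ y : Fin m → Bool, sgn m v y * (guessProb m r y * C ^ strVal m y) := by
  have hC0 : (0 : ℝ) < C := lt_of_lt_of_le one_pos hC
  have hρ1 : ρ ≤ 1 := le_trans hρε (by linarith)
  intro m
  induction m with
  | zero =>
      intro r v _ _ _ _ _
      have hcor : IsCorrect 0 v default := fun i => i.elim0
      rw [Fintype.sum_unique]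
      unfold sgn
      split
      · unfold guessProb strVal
        norm_num
      · rename_i h
        exact absurd (fun i => i.elim0) h
  | succ m ih =>
      intro r v hside hr0 hr1 hyes hno
      have hr00 : 0 ≤ r 0 Fin.elim0 := hr0 _ _
      have hr01 : r 0 Fin.elim0 ≤ 1 := hr1 _ _
      have hside' : ∀ t : ℕ, t ≤ m → (t : ℝ) / C ≤ ρ ^ t :=
        fun t ht => hside t (ht.trans (Nat.le_succ m))
      have hK1 : (1 : ℝ) ≤ C ^ (2 ^ m) := one_le_pow₀ hC
      have hK0 : (0 : ℝ) < C ^ (2 ^ m) := lt_of_lt_of_le one_pos hK1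
      have hKD : C ^ (2 ^ m) = C ^ (2 ^ m - 1) * C := by
        rw [← pow_succ]
        congr 1
        have : 1 ≤ 2 ^ m := Nat.one_le_two_pow
        omega
      have hD0 : (0 : ℝ) ≤ C ^ (2 ^ m - 1) := by positivity
      have hSt : ρ ^ m - m / C ≤ ∑ z : Fin m → Bool,
          sgn m (tailV v true) z * (guessProb m (tailR r true) z * C ^ strVal m z) :=
        ih (tailR r true) (tailV v true) hside'
          (fun i w => hr0 _ _) (fun i w => hr1 _ _)
          (fun i w h => hyes _ _ h) (fun i w h => hno _ _ h)
      have hSf : ρ ^ m - m / C ≤ ∑ z : Fin m → Bool,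
          sgn m (tailV v false) z * (guessProb m (tailR r false) z * C ^ strVal m z) :=
        ih (tailR r false) (tailV v false) hside'
          (fun i w => hr0 _ _) (fun i w => hr1 _ _)
          (fun i w h => hyes _ _ h) (fun i w h => hno _ _ h)
      have hbase0 : 0 ≤ ρ ^ m - m / C := by
        have := hside' m le_rfl; linarith
      have hgoal0 : 0 ≤ ρ * ρ ^ m - ((m : ℝ) + 1) / C := by
        have h1 := hside (m + 1) le_rfl
        push_cast at h1
        have h2 : ρ ^ (m + 1) = ρ * ρ ^ m := by ring
        rw [h2] at h1
        linarith
      have hSt0 : 0 ≤ ∑ z : Fin m → Bool,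
          sgn m (tailV v true) z * (guessProb m (tailR r true) z * C ^ strVal m z) :=
        le_trans hbase0 hSt
      have hSf0 : 0 ≤ ∑ z : Fin m → Bool,
          sgn m (tailV v false) z * (guessProb m (tailR r false) z * C ^ strVal m z) :=
        le_trans hbase0 hSf
      have hT0 : 0 ≤ ∑ z : Fin m → Bool, guessProb m (tailR r false) z * C ^ strVal m z :=
        Finset.sum_nonneg fun z _ => by
          have := guessProb_nonneg (tailR r false) (fun i w => hr0 _ _) (fun i w => hr1 _ _) z
          positivity
      have hTle : (∑ z : Fin m → Bool, guessProb m (tailR r false) z * C ^ strVal m z)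
          ≤ C ^ (2 ^ m - 1) :=
        sum_weight_le (tailR r false) C hC (fun i w => hr0 _ _) (fun i w => hr1 _ _)
      rw [sum_cons (fun y => sgn (m+1) v y * (guessProb (m+1) r y * C ^ strVal (m+1) y))]
      have hpowsucc : ρ ^ (m + 1) = ρ * ρ ^ m := by ring
      have hcastsucc : ((m + 1 : ℕ) : ℝ) = (m : ℝ) + 1 := by push_cast; ring
      cases hL : v 0 Fin.elim0 with
      | yes =>
          have sgn_t : ∀ z : Fin m → Bool,
              sgn (m+1) v (Fin.cons true z) = sgn m (tailV v true) z := by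
            intro z
            refine sgn_congr _ _ _ _ ?_ ?_
            · rw [isCorrect_cons, hL]; simp
            · rw [clean_cons, hL]; simp
          have hA : (∑ z : Fin m → Bool, sgn (m+1) v (Fin.cons true z) *
                (guessProb (m+1) r (Fin.cons true z) * C ^ strVal (m+1) (Fin.cons true z)))
              = (r 0 Fin.elim0 * C ^ (2 ^ m)) * ∑ z : Fin m → Bool,
                  sgn m (tailV v true) z * (guessProb m (tailR r true) z * C ^ strVal m z) := by
            rw [Finset.mul_sum]
            refine Finset.sum_congr rfl fun z _ => ?_
            rw [sgn_t z, guessProb_cons, strVal_cons, if_pos rfl, if_pos rfl, pow_add]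
            ring
          have hB : -(C ^ (2 ^ m - 1)) ≤ ∑ z : Fin m → Bool, sgn (m+1) v (Fin.cons false z) *
                (guessProb (m+1) r (Fin.cons false z) * C ^ strVal (m+1) (Fin.cons false z)) := by
            have step : ∀ z : Fin m → Bool,
                -(guessProb m (tailR r false) z * C ^ strVal m z) ≤
                  sgn (m+1) v (Fin.cons false z) *
                    (guessProb (m+1) r (Fin.cons false z) * C ^ strVal (m+1) (Fin.cons false z)) := by
              intro z
              rw [guessProb_cons, strVal_cons, if_neg (by simp), if_neg (by simp), pow_add]
              have hg0 : 0 ≤ guessProb m (tailR r false) z :=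
                guessProb_nonneg (tailR r false) (fun i w => hr0 _ _) (fun i w => hr1 _ _) z
              have hw : 0 ≤ (1 - r 0 Fin.elim0) * guessProb m (tailR r false) z *
                  (C ^ (0:ℕ) * C ^ strVal m z) :=
                mul_nonneg (mul_nonneg (by linarith) hg0) (by positivity)
              have hw2 : (1 - r 0 Fin.elim0) * guessProb m (tailR r false) z *
                  (C ^ (0:ℕ) * C ^ strVal m z) ≤ guessProb m (tailR r false) z * C ^ strVal m z := by
                have hcw : 0 ≤ C ^ strVal m z := by positivity
                simp only [pow_zero, one_mul]
                nlinarith [mul_nonneg hg0 hcw]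
              have hs := neg_one_le_sgn (m := m+1) v (Fin.cons false z)
              have key : -((1 - r 0 Fin.elim0) * guessProb m (tailR r false) z *
                  (C ^ (0:ℕ) * C ^ strVal m z)) ≤ sgn (m+1) v (Fin.cons false z) *
                    ((1 - r 0 Fin.elim0) * guessProb m (tailR r false) z *
                      (C ^ (0:ℕ) * C ^ strVal m z)) := by
                nlinarith [mul_le_mul_of_nonneg_right hs hw]
              calc -(guessProb m (tailR r false) z * C ^ strVal m z)
                  ≤ -((1 - r 0 Fin.elim0) * guessProb m (tailR r false) z *
                      (C ^ (0:ℕ) * C ^ strVal m z)) := by linarith [hw2]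
                _ ≤ _ := by
                    refine key.trans_eq ?_
                    ring
            calc -(C ^ (2 ^ m - 1))
                ≤ -(∑ z : Fin m → Bool, guessProb m (tailR r false) z * C ^ strVal m z) := by
                  linarith [hTle]
              _ = ∑ z : Fin m → Bool, -(guessProb m (tailR r false) z * C ^ strVal m z) := by
                  rw [← Finset.sum_neg_distrib]
              _ ≤ _ := Finset.sum_le_sum fun z _ => step z
          rw [hA]
          have key := arith_yes C ρ (m : ℝ) (C ^ (2 ^ m)) (C ^ (2 ^ m - 1))
            (∑ z : Fin m → Bool,
              sgn m (tailV v true) z * (guessProb m (tailR r true) z * C ^ strVal m z))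
            (ρ ^ m) (r 0 Fin.elim0) hC0 hρ0 hρ1 (by positivity) hKD hK1 hD0 hgoal0 hSt hSt0
            (hyes _ _ hL)
          rw [hpowsucc, hcastsucc]
          linarith [key, hB]
      | no =>
          have sgn_t : ∀ z : Fin m → Bool, sgn (m+1) v (Fin.cons true z) = 0 := by
            intro z
            refine sgn_eq_zero _ _ ?_ ?_
            · intro h
              have := (isCorrect_cons v true z |>.mp h).1.2
              rw [hL] at this
              exact absurd (this rfl) (by simp)
            · intro h
              have := (clean_cons v true z |>.mp h).1
              rw [hL] at this
              exact this ⟨rfl, rfl⟩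
          have sgn_f : ∀ z : Fin m → Bool,
              sgn (m+1) v (Fin.cons false z) = sgn m (tailV v false) z := by
            intro z
            refine sgn_congr _ _ _ _ ?_ ?_
            · rw [isCorrect_cons, hL]; simp
            · rw [clean_cons, hL]; simp
          have hA : (∑ z : Fin m → Bool, sgn (m+1) v (Fin.cons true z) *
                (guessProb (m+1) r (Fin.cons true z) * C ^ strVal (m+1) (Fin.cons true z))) = 0 :=
            Finset.sum_eq_zero fun z _ => by rw [sgn_t z, zero_mul]
          have hB : (∑ z : Fin m → Bool, sgn (m+1) v (Fin.cons false z) *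
                (guessProb (m+1) r (Fin.cons false z) * C ^ strVal (m+1) (Fin.cons false z)))
              = (1 - r 0 Fin.elim0) * ∑ z : Fin m → Bool,
                  sgn m (tailV v false) z * (guessProb m (tailR r false) z * C ^ strVal m z) := by
            rw [Finset.mul_sum]
            refine Finset.sum_congr rfl fun z _ => ?_
            rw [sgn_f z, guessProb_cons, strVal_cons, if_neg (by simp), if_neg (by simp), pow_add]
            ring
          rw [hA, hB, zero_add]
          have key := arith_no C ρ ε (m : ℝ)
            (∑ z : Fin m → Bool,
              sgn m (tailV v false) z * (guessProb m (tailR r false) z * C ^ strVal m z))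
            (ρ ^ m) (r 0 Fin.elim0) hC0 hρ0 hρ1 hρε (by positivity) hSf hbase0 (hno _ _ hL)
          rw [hpowsucc, hcastsucc]
          linarith [key]
      | inv =>
          have sgn_t : ∀ z : Fin m → Bool,
              sgn (m+1) v (Fin.cons true z) = sgn m (tailV v true) z := by
            intro z
            refine sgn_congr _ _ _ _ ?_ ?_
            · rw [isCorrect_cons, hL]; simp
            · rw [clean_cons, hL]; simp
          have sgn_f : ∀ z : Fin m → Bool,
              sgn (m+1) v (Fin.cons false z) = sgn m (tailV v false) z := by
            intro z
            refine sgn_congr _ _ _ _ ?_ ?_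
            · rw [isCorrect_cons, hL]; simp
            · rw [clean_cons, hL]; simp
          have hA : (∑ z : Fin m → Bool, sgn (m+1) v (Fin.cons true z) *
                (guessProb (m+1) r (Fin.cons true z) * C ^ strVal (m+1) (Fin.cons true z)))
              = (r 0 Fin.elim0 * C ^ (2 ^ m)) * ∑ z : Fin m → Bool,
                  sgn m (tailV v true) z * (guessProb m (tailR r true) z * C ^ strVal m z) := by
            rw [Finset.mul_sum]
            refine Finset.sum_congr rfl fun z _ => ?_
            rw [sgn_t z, guessProb_cons, strVal_cons, if_pos rfl, if_pos rfl, pow_add]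
            ring
          have hB : (∑ z : Fin m → Bool, sgn (m+1) v (Fin.cons false z) *
                (guessProb (m+1) r (Fin.cons false z) * C ^ strVal (m+1) (Fin.cons false z)))
              = (1 - r 0 Fin.elim0) * ∑ z : Fin m → Bool,
                  sgn m (tailV v false) z * (guessProb m (tailR r false) z * C ^ strVal m z) := by
            rw [Finset.mul_sum]
            refine Finset.sum_congr rfl fun z _ => ?_
            rw [sgn_f z, guessProb_cons, strVal_cons, if_neg (by simp), if_neg (by simp), pow_add]
            ring
          rw [hA, hB]
          have key := arith_inv C ρ (m : ℝ) (C ^ (2 ^ m))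
            (∑ z : Fin m → Bool,
              sgn m (tailV v true) z * (guessProb m (tailR r true) z * C ^ strVal m z))
            (∑ z : Fin m → Bool,
              sgn m (tailV v false) z * (guessProb m (tailR r false) z * C ^ strVal m z))
            (ρ ^ m) (r 0 Fin.elim0) hC0 hρ0 hρ1 hK1 hr00 hr01 hSt hSf hbase0 (by positivity)
          rw [hpowsucc, hcastsucc]
          linarith [key]

/-- **Hierarchical-voting lower bound**: the probability that the surviving query string
is correct exceeds the probability that it is an incorrect string (whose every mistake
answers 0 where the correct answer is 1) by at least
`(2^{−q})^{N−1} · 2^{−Mm} · (1 − 1/2^m − m/(2^p − 1))`. -/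
theorem hierarchical_voting_lower_bound (m M p N : ℕ)
    (hm : 1 ≤ m) (hM : 1 ≤ M) (hp : 1 ≤ p) (hN : 2 ^ m ≤ N)
    (r : (i : Fin m) → (Fin i → Bool) → ℝ)
    (v : (i : Fin m) → (Fin i → Bool) → QLabel)
    (hr0 : ∀ i w, 0 ≤ r i w) (hr1 : ∀ i w, r i w ≤ 1)
    (hyes : ∀ i w, v i w = QLabel.yes → (1 - 1 / 2 ^ p : ℝ) / 2 ^ M ≤ r i w)
    (hno : ∀ i w, v i w = QLabel.no → r i w ≤ (1 / 2 ^ p : ℝ)) :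
    ((1 : ℝ) / 2 ^ ((M + 2) * m)) ^ (N - 1) * (1 / 2 ^ (M * m)) *
        (1 - 1 / 2 ^ m - (m : ℝ) / (2 ^ p - 1)) ≤
      ∑ y ∈ Finset.univ.filter (IsCorrect m v), voteProb m M N r y -
        ∑ y ∈ Finset.univ.filter (IsIncorrect m v), voteProb m M N r y := by
  set C : ℝ := (2 : ℝ) ^ ((M + 2) * m) with hCdef
  set ρ : ℝ := (1 - 1 / 2 ^ p : ℝ) / 2 ^ M with hρdef
  set ε : ℝ := (1 / 2 ^ p : ℝ) with hεdef
  have h2p : (2 : ℝ) ≤ 2 ^ p := by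
    calc (2:ℝ) = 2 ^ 1 := (pow_one 2).symm
      _ ≤ 2 ^ p := pow_le_pow_right₀ one_le_two hp
  have hε0 : 0 ≤ ε := by positivity
  have hεhalf : ε ≤ 1 / 2 := by
    rw [hεdef]
    exact one_div_le_one_div_of_le (by norm_num) h2p
  have h2M : (1 : ℝ) ≤ 2 ^ M := one_le_pow₀ one_le_two
  have hρ0 : 0 ≤ ρ := by
    rw [hρdef]
    apply div_nonneg (by linarith) (by positivity)
  have hρε : ρ ≤ 1 - ε := by
    rw [hρdef]
    calc (1 - ε) / 2 ^ M ≤ (1 - ε) / 1 := by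
          apply div_le_div_of_nonneg_left (by linarith) (by norm_num) h2M
      _ = 1 - ε := div_one _
  have hρ1 : ρ ≤ 1 := by linarith
  have hC1 : (1 : ℝ) ≤ C := one_le_pow₀ one_le_two
  have hC0 : (0 : ℝ) < C := by positivity
  have hρlb : (1 : ℝ) / 2 ^ (M + 1) ≤ ρ := by
    rw [hρdef]
    have : (1 : ℝ) / 2 ^ (M + 1) = (1 / 2) / 2 ^ M := by
      rw [pow_succ]; ring
    rw [this]
    apply div_le_div_of_nonneg_right ?_ (by positivity)
    · linarith
  have hm2m : (m : ℝ) ≤ (2 : ℝ) ^ m := by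
    have := (show m < 2 ^ m from Nat.lt_two_pow_self).le
    exact_mod_cast this
  have hCsplit : C = (2 : ℝ) ^ m * ((2 : ℝ) ^ m * (2 : ℝ) ^ (M * m)) := by
    rw [hCdef, show (M + 2) * m = m + (m + M * m) by ring, pow_add, pow_add]
  have hside : ∀ t : ℕ, t ≤ m → (t : ℝ) / C ≤ ρ ^ t := by
    intro t ht
    have htm : (t : ℝ) ≤ (2 : ℝ) ^ m := le_trans (by exact_mod_cast ht) hm2m
    calc (t : ℝ) / C ≤ (2 : ℝ) ^ m / C := by gcongr
      _ = ((1 : ℝ) / 2 ^ (M + 1)) ^ m := by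
          rw [hCsplit, one_div_pow, ← pow_mul]
          have h1 : ((2:ℝ) ^ m) ≠ 0 := by positivity
          have h2 : ((2:ℝ) ^ ((M+1)*m)) = (2:ℝ) ^ m * (2:ℝ) ^ (M*m) := by
            rw [show (M+1)*m = m + M*m by ring, pow_add]
          rw [h2]
          field_simp
      _ ≤ ((1 : ℝ) / 2 ^ (M + 1)) ^ t := by
          apply pow_le_pow_of_le_one (by positivity) ?_ ht
          rw [div_le_one (by positivity)]
          exact one_le_pow₀ one_le_two
      _ ≤ ρ ^ t := pow_le_pow_left₀ (by positivity) hρlb t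
  -- apply the key lemma
  have hmain := aux_lower C ρ ε hC1 hρ0 hε0 hρε m r v hside hr0 hr1
    (fun i w h => hyes i w h) (fun i w h => hno i w h)
  -- rewrite the goal's sums
  have hsplit : ∑ y ∈ Finset.univ.filter (IsCorrect m v), voteProb m M N r y
      - ∑ y ∈ Finset.univ.filter (IsIncorrect m v), voteProb m M N r y
      = ∑ y : Fin m → Bool, sgn m v y * voteProb m M N r y := by
    rw [Finset.sum_filter, Finset.sum_filter, ← Finset.sum_sub_distrib]
    refine Finset.sum_congr rfl fun y _ => ?_
    unfold sgn
    by_cases hc : IsCorrect m v y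
    · rw [if_pos hc, if_pos hc, if_neg (fun h : IsIncorrect m v y => h.1 hc)]
      ring
    · rw [if_neg hc, if_neg hc]
      by_cases hk : Clean m v y
      · rw [if_pos (show IsIncorrect m v y from ⟨hc, hk⟩),
            if_pos hk]
        ring
      · rw [if_neg (fun h : IsIncorrect m v y => hk h.2), if_neg hk]
        ring
  have hvote : ∀ y : Fin m → Bool, voteProb m M N r y =
      ((1 : ℝ) / 2 ^ ((M + 2) * m)) ^ (N - 1) * (guessProb m r y * C ^ strVal m y) := by
    intro y
    unfold voteProb
    have hval : strVal m y ≤ N - 1 := by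
      have h := strVal_lt y
      omega
    have hcc : ((1:ℝ) / 2 ^ ((M + 2) * m)) * C = 1 := by
      rw [hCdef]
      field_simp
    calc guessProb m r y * ((1:ℝ) / 2 ^ ((M + 2) * m)) ^ (N - 1 - strVal m y)
        = guessProb m r y * (((1:ℝ) / 2 ^ ((M + 2) * m)) ^ (N - 1 - strVal m y) *
            (((1:ℝ) / 2 ^ ((M + 2) * m)) * C) ^ (strVal m y)) := by
          rw [hcc, one_pow, mul_one]
      _ = ((1:ℝ) / 2 ^ ((M + 2) * m)) ^ (N - 1 - strVal m y) *
            ((1:ℝ) / 2 ^ ((M + 2) * m)) ^ (strVal m y) *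
            (guessProb m r y * C ^ strVal m y) := by
          rw [mul_pow]; ring
      _ = ((1:ℝ) / 2 ^ ((M + 2) * m)) ^ (N - 1) * (guessProb m r y * C ^ strVal m y) := by
          rw [← pow_add, Nat.sub_add_cancel hval]
  rw [hsplit]
  have hfact : ∑ y : Fin m → Bool, sgn m v y * voteProb m M N r y =
      ((1 : ℝ) / 2 ^ ((M + 2) * m)) ^ (N - 1) *
        ∑ y : Fin m → Bool, sgn m v y * (guessProb m r y * C ^ strVal m y) := by
    rw [Finset.mul_sum]
    refine Finset.sum_congr rfl fun y _ => ?_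
    rw [hvote y]
    ring
  rw [hfact]
  -- final numeric comparison
  have hfin : (1 / 2 ^ (M * m) : ℝ) * (1 - 1 / 2 ^ m - (m : ℝ) / (2 ^ p - 1))
      ≤ ρ ^ m - (m : ℝ) / C := by
    have hρm : ρ ^ m = (1 - ε) ^ m / 2 ^ (M * m) := by
      rw [hρdef, div_pow, ← pow_mul]
    have hb : 1 - (m : ℝ) * ε ≤ (1 - ε) ^ m := by
      have := one_add_mul_le_pow (a := -ε) (by linarith) m
      calc 1 - (m : ℝ) * ε = 1 + (m : ℝ) * (-ε) := by ring
        _ ≤ (1 + -ε) ^ m := this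
        _ = (1 - ε) ^ m := by ring_nf
    have hεε' : ε ≤ 1 / ((2 : ℝ) ^ p - 1) := by
      rw [hεdef]
      exact one_div_le_one_div_of_le (by linarith) (by linarith)
    have hX : 1 - (m : ℝ) / ((2 : ℝ) ^ p - 1) ≤ (1 - ε) ^ m := by
      have h1 : (m : ℝ) * ε ≤ (m : ℝ) * (1 / ((2 : ℝ) ^ p - 1)) :=
        mul_le_mul_of_nonneg_left hεε' (by positivity)
      have h2 : (m : ℝ) * (1 / ((2 : ℝ) ^ p - 1)) = (m : ℝ) / ((2 : ℝ) ^ p - 1) := by ring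
      linarith [hb]
    have hmCb : (m : ℝ) / C ≤ 1 / ((2 : ℝ) ^ m * (2 : ℝ) ^ (M * m)) := by
      calc (m : ℝ) / C ≤ (2 : ℝ) ^ m / C := by gcongr
        _ = 1 / ((2 : ℝ) ^ m * (2 : ℝ) ^ (M * m)) := by
            rw [hCsplit]
            have h1 : ((2:ℝ) ^ m) ≠ 0 := by positivity
            have h2 : ((2:ℝ) ^ (M*m)) ≠ 0 := by positivity
            field_simp
    have hMm0 : (0:ℝ) < 2 ^ (M * m) := by positivity
    have h2m0 : (0:ℝ) < 2 ^ m := by positivity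
    have e1 : (1 / 2 ^ (M * m) : ℝ) * (1 - 1 / 2 ^ m - (m : ℝ) / (2 ^ p - 1))
        = (1 - (m : ℝ) / ((2:ℝ) ^ p - 1)) / 2 ^ (M * m)
          - 1 / ((2 : ℝ) ^ m * (2 : ℝ) ^ (M * m)) := by
      field_simp
      ring
    have e2 : (1 - (m : ℝ) / ((2:ℝ) ^ p - 1)) / 2 ^ (M * m) ≤ (1 - ε) ^ m / 2 ^ (M * m) := by
      gcongr
    rw [e1, hρm]
    linarith [hmCb, e2]
  have hcN : (0:ℝ) ≤ ((1 : ℝ) / 2 ^ ((M + 2) * m)) ^ (N - 1) := by positivity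
  calc ((1 : ℝ) / 2 ^ ((M + 2) * m)) ^ (N - 1) * (1 / 2 ^ (M * m)) *
        (1 - 1 / 2 ^ m - (m : ℝ) / (2 ^ p - 1))
      = ((1 : ℝ) / 2 ^ ((M + 2) * m)) ^ (N - 1) *
          ((1 / 2 ^ (M * m)) * (1 - 1 / 2 ^ m - (m : ℝ) / (2 ^ p - 1))) := by ring
    _ ≤ ((1 : ℝ) / 2 ^ ((M + 2) * m)) ^ (N - 1) * (ρ ^ m - (m : ℝ) / C) :=
        mul_le_mul_of_nonneg_left hfin hcN
    _ ≤ _ := mul_le_mul_of_nonneg_left (le_trans (by norm_num) hmain) hcN
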